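/- The variation w must change sign before τ₁ (Lemma 5.4): Let α ∈ G ∪ N, let u be the corresponding solution (so u is strictly decreasing on (0, b(α))), let ξ₁ = (b̃/ã)^{m/2} be the positive zero of f, and let τ₁ ∈ (0, b(α)) be the unique point with u(τ₁) = ξ₁. Let w be the solution of the linearized equation w''(τ) + coth(τ)·w'(τ) + f'(u(τ))·w(τ) = 0 on (0,∞) with w(0) = 1 and lim_{τ→0+} w'(τ) = 0, where f'(s) = ã(1+2/m)s^{2/m} − b̃. Then w has a zero in (0, τ₁). -/

import Mathlib

open Set Filter

private lemma aux_pos_of_deriv_pos {g : ℝ → ℝ} {c : ℝ} (hc : 0 < c)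
    (hcont : ContinuousOn g (Ioc 0 c))
    (hderiv : ∀ t ∈ Ioo 0 c, 0 < deriv g t)
    (hlim : Tendsto g (nhdsWithin 0 (Ioi 0)) (nhds 0)) :
    ∀ t ∈ Ioc 0 c, 0 < g t := by
  have hmono : StrictMonoOn g (Ioc 0 c) :=
    strictMonoOn_of_deriv_pos (convex_Ioc 0 c) hcont (by rwa [interior_Ioc])
  intro t ht
  have ht2 : t / 2 ∈ Ioc 0 c := ⟨by linarith [ht.1], by linarith [ht.1, ht.2]⟩
  have h1 : (0:ℝ) ≤ g (t / 2) := by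
    refine le_of_tendsto hlim ?_
    filter_upwards [Ioo_mem_nhdsGT_of_mem
      (⟨le_refl (0:ℝ), ht2.1⟩ : (0:ℝ) ∈ Ico (0:ℝ) (t/2))] with s hs
    exact (hmono ⟨hs.1, hs.2.le.trans ht2.2⟩ ht2 hs.2).le
  have h2 : g (t / 2) < g t := hmono ht2 ht (by linarith [ht.1])
  linarith

private lemma aux_le_of_deriv_nonpos {g : ℝ → ℝ} {L : ℝ}
    (hdiff : ∀ t ∈ Ioi (0:ℝ), DifferentiableAt ℝ g t)
    (hderiv : ∀ t ∈ Ioi (0:ℝ), deriv g t ≤ 0)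
    (hlim : Tendsto g (nhdsWithin 0 (Ioi 0)) (nhds L)) :
    ∀ t ∈ Ioi (0:ℝ), g t ≤ L := by
  have hanti : AntitoneOn g (Ioi 0) := by
    refine antitoneOn_of_deriv_nonpos (convex_Ioi 0)
      (fun t ht => (hdiff t ht).continuousAt.continuousWithinAt) ?_ ?_
    · intro t ht; rw [interior_Ioi] at ht; exact (hdiff t ht).differentiableWithinAt
    · intro t ht; rw [interior_Ioi] at ht; exact hderiv t ht
  intro t ht
  refine ge_of_tendsto hlim ?_
  filter_upwards [Ioo_mem_nhdsGT_of_mem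
    (⟨le_refl (0:ℝ), ht⟩ : (0:ℝ) ∈ Ico (0:ℝ) t)] with s hs
  exact hanti hs.1 ht hs.2.le

private lemma xi_pow (m a b : ℝ) (hm : 2 < m) (ha : 0 < a) (hb : 0 < b) :
    (((b / a) ^ (m / 2) : ℝ)) ^ (2 / m) = b / a := by
  have hm0 : m ≠ 0 := by linarith
  rw [← Real.rpow_mul (div_pos hb ha).le,
    show m / 2 * (2 / m) = 1 by field_simp, Real.rpow_one]

private lemma alpha_gt (m a b ξ₁ α : ℝ) (hm : 2 < m) (ha : 0 < a) (hb : 0 < b)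
    (hα : 0 < α) (hξ₁ : ξ₁ = (b / a) ^ (m / 2))
    (hxipow : ξ₁ ^ (2 / m) = b / a)
    (u : ℝ → ℝ)
    (huc : ContinuousOn u (Ici 0))
    (hud : ∀ τ ∈ Ioi (0 : ℝ), DifferentiableAt ℝ u τ)
    (hud' : ∀ τ ∈ Ioi (0 : ℝ), DifferentiableAt ℝ (deriv u) τ)
    (hode : ∀ τ ∈ Ioi (0 : ℝ),
      deriv (deriv u) τ + (Real.cosh τ / Real.sinh τ) * deriv u τ
        + (a * u τ ^ (1 + 2 / m) - b * u τ) = 0)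
    (hu0 : u 0 = α)
    (hu'0 : Tendsto (deriv u) (nhdsWithin 0 (Ioi 0)) (nhds 0))
    (l : Filter ℝ) [l.NeBot] (hlm : Ioi (0:ℝ) ∈ l) (hul : Tendsto u l (nhds 0)) :
    ξ₁ < α := by
  by_contra hcon
  push_neg at hcon
  have hm0 : (0:ℝ) < m := by linarith
  have hD : (0:ℝ) < 2 + 2 / m := by positivity
  have h1le : (1:ℝ) ≤ 2 + 2 / m := by
    have : (0:ℝ) < 2 / m := by positivity
    linarith
  -- derivative of the energy
  have hEd : ∀ t ∈ Ioi (0:ℝ),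
      HasDerivAt (fun s => (deriv u s) ^ 2 / 2 +
        (a * u s ^ (2 + 2 / m) / (2 + 2 / m) - b * u s ^ 2 / 2))
      (-((Real.cosh t / Real.sinh t) * (deriv u t) ^ 2)) t := by
    intro t ht
    have hts : (0:ℝ) < Real.sinh t := Real.sinh_pos_iff.2 ht
    have hU := (hud t ht).hasDerivAt
    have hU' := (hud' t ht).hasDerivAt
    have hu2 : deriv (deriv u) t
        = -((Real.cosh t / Real.sinh t) * deriv u t) - (a * u t ^ (1 + 2 / m) - b * u t) := by
      have := hode t ht; linarith
    have hbig := ((hU'.pow 2).div_const 2).add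
      ((((hU.rpow_const (p := 2 + 2 / m) (Or.inr h1le)).const_mul a).div_const (2 + 2 / m)).sub
        (((hU.pow 2).const_mul b).div_const 2))
    convert hbig using 1
    · rfl
    · rfl
    · rfl
    rw [hu2, show (2:ℝ) + 2 / m - 1 = 1 + 2 / m by ring]
    push_cast
    field_simp
    ring
  -- E is bounded by its limit at 0⁺
  have hu0' : Tendsto u (nhdsWithin 0 (Ioi 0)) (nhds α) := by
    have h : Tendsto u (nhdsWithin 0 (Ici 0)) (nhds (u 0)) := huc 0 self_mem_Ici
    rw [hu0] at h
    exact h.mono_left (nhdsWithin_mono 0 Ioi_subset_Ici_self)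
  have hElim : Tendsto (fun s => (deriv u s) ^ 2 / 2 +
        (a * u s ^ (2 + 2 / m) / (2 + 2 / m) - b * u s ^ 2 / 2))
      (nhdsWithin 0 (Ioi 0))
      (nhds ((0:ℝ) ^ 2 / 2 + (a * α ^ (2 + 2 / m) / (2 + 2 / m) - b * α ^ 2 / 2))) := by
    have h2 : Tendsto (fun t => u t ^ (2 + 2 / m)) (nhdsWithin 0 (Ioi 0))
        (nhds (α ^ (2 + 2 / m))) :=
      (Real.continuousAt_rpow_const α (2 + 2 / m) (Or.inl hα.ne')).tendsto.comp hu0'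
    exact ((hu'0.pow 2).div_const 2).add
      (((h2.const_mul a).div_const (2 + 2 / m)).sub (((hu0'.pow 2).const_mul b).div_const 2))
  have hEle : ∀ t ∈ Ioi (0:ℝ), (deriv u t) ^ 2 / 2 +
      (a * u t ^ (2 + 2 / m) / (2 + 2 / m) - b * u t ^ 2 / 2)
      ≤ (0:ℝ) ^ 2 / 2 + (a * α ^ (2 + 2 / m) / (2 + 2 / m) - b * α ^ 2 / 2) := by
    refine aux_le_of_deriv_nonpos (fun t ht => (hEd t ht).differentiableAt) ?_ hElim
    intro t ht
    rw [(hEd t ht).deriv]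
    have h1 : (0:ℝ) ≤ Real.cosh t / Real.sinh t :=
      div_nonneg (Real.cosh_pos t).le (Real.sinh_pos_iff.2 ht).le
    have := mul_nonneg h1 (sq_nonneg (deriv u t))
    linarith
  -- Fint α < 0 when α ≤ ξ₁
  have hFα : a * α ^ (2 + 2 / m) / (2 + 2 / m) - b * α ^ 2 / 2 < 0 := by
    have hαle : α ^ (2 / m) ≤ b / a := by
      calc α ^ (2 / m) ≤ ξ₁ ^ (2 / m) :=
            Real.rpow_le_rpow hα.le hcon (by positivity)
        _ = b / a := hxipow
    have hsplit : α ^ (2 + 2 / m) = α ^ (2 / m) * α ^ 2 := by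
      rw [show (2:ℝ) + 2 / m = 2 / m + 2 by ring, Real.rpow_add hα, Real.rpow_two]
    have h1 : a * α ^ (2 + 2 / m) ≤ b * α ^ 2 := by
      rw [hsplit]
      have h2 := mul_le_mul_of_nonneg_right hαle (sq_nonneg α)
      calc a * (α ^ (2 / m) * α ^ 2) ≤ a * (b / a * α ^ 2) :=
            mul_le_mul_of_nonneg_left h2 ha.le
        _ = b * α ^ 2 := by field_simp
    have hbα : (0:ℝ) < b * α ^ 2 := by positivity
    have c1 : a * α ^ (2 + 2 / m) / (2 + 2 / m) ≤ b * α ^ 2 / (2 + 2 / m) := by gcongr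
    have c2 : b * α ^ 2 / (2 + 2 / m) < b * α ^ 2 / 2 := by
      apply div_lt_div_of_pos_left hbα (by norm_num)
      have : (0:ℝ) < 2 / m := by positivity
      linarith
    linarith
  -- pick a point where u is small
  have hcont0 : ContinuousAt (fun x : ℝ => x ^ (2 + 2 / m)) 0 :=
    Real.continuousAt_rpow_const 0 _ (Or.inr (by positivity))
  have hFi0 : Tendsto (fun t => a * u t ^ (2 + 2 / m) / (2 + 2 / m) - b * u t ^ 2 / 2)
      l (nhds 0) := by
    have h := (((hcont0.tendsto.comp hul).const_mul a).div_const (2 + 2 / m)).sub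
      (((hul.pow 2).const_mul b).div_const 2)
    simpa [Real.zero_rpow hD.ne'] using h
  have hev1 : ∀ᶠ t in l, a * α ^ (2 + 2 / m) / (2 + 2 / m) - b * α ^ 2 / 2
      < a * u t ^ (2 + 2 / m) / (2 + 2 / m) - b * u t ^ 2 / 2 :=
    hFi0.eventually (eventually_gt_nhds hFα)
  have hev2 : ∀ᶠ t in l, (0:ℝ) < t := by
    filter_upwards [hlm] with t ht; exact ht
  obtain ⟨t, ht0, htF⟩ := (hev2.and hev1).exists
  have hEt := hEle t ht0
  have hsq : (0:ℝ) ≤ (deriv u t) ^ 2 / 2 := by positivity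
  norm_num at hEt
  linarith
set_option maxHeartbeats 1000000 in
private lemma key (m a b ξ₁ α : ℝ) (hm : 2 < m) (ha : 0 < a) (hb : 0 < b)
    (hxipow : ξ₁ ^ (2 / m) = b / a) (hξpos : 0 < ξ₁)
    (u w : ℝ → ℝ)
    (huc : ContinuousOn u (Ici 0))
    (hud : ∀ τ ∈ Ioi (0 : ℝ), DifferentiableAt ℝ u τ)
    (hud' : ∀ τ ∈ Ioi (0 : ℝ), DifferentiableAt ℝ (deriv u) τ)
    (hode : ∀ τ ∈ Ioi (0 : ℝ),
      deriv (deriv u) τ + (Real.cosh τ / Real.sinh τ) * deriv u τ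
        + (a * u τ ^ (1 + 2 / m) - b * u τ) = 0)
    (hu0 : u 0 = α)
    (hu'0 : Tendsto (deriv u) (nhdsWithin 0 (Ioi 0)) (nhds 0))
    (hwc : ContinuousOn w (Ici 0))
    (hwd : ∀ τ ∈ Ioi (0 : ℝ), DifferentiableAt ℝ w τ)
    (hwd' : ∀ τ ∈ Ioi (0 : ℝ), DifferentiableAt ℝ (deriv w) τ)
    (hwode : ∀ τ ∈ Ioi (0 : ℝ),
      deriv (deriv w) τ + (Real.cosh τ / Real.sinh τ) * deriv w τ
        + (a * (1 + 2 / m) * u τ ^ (2 / m) - b) * w τ = 0)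
    (hw0 : w 0 = 1)
    (hw'0 : Tendsto (deriv w) (nhdsWithin 0 (Ioi 0)) (nhds 0))
    (hαξ : ξ₁ < α)
    (τ₁ : ℝ) (hτ₁ : 0 < τ₁) (huτ₁ : u τ₁ = ξ₁)
    (hup : ∀ τ ∈ Icc 0 τ₁, 0 < u τ) :
    ∃ τ ∈ Ioo 0 τ₁, w τ = 0 := by
  by_contra hcon
  push_neg at hcon
  have hm0 : (0:ℝ) < m := by linarith
  have hα0 : 0 < α := hξpos.trans hαξ
  have hξb : a * ξ₁ ^ (2 / m) = b := by rw [hxipow]; field_simp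
  -- w is positive on (0, τ₁)
  have hwpos : ∀ t ∈ Ioo (0:ℝ) τ₁, 0 < w t := by
    intro t ht
    rcases lt_trichotomy (w t) 0 with hlt | heq | hgt
    · exfalso
      have hwicc : ContinuousOn w (Icc 0 t) :=
        hwc.mono (fun x hx => hx.1)
      have hmem : (0:ℝ) ∈ Ioo (w t) (w 0) := by rw [hw0]; exact ⟨hlt, one_pos⟩
      obtain ⟨c, hc, hwc0⟩ := intermediate_value_Ioo' ht.1.le hwicc hmem
      exact hcon c ⟨hc.1, hc.2.trans ht.2⟩ hwc0
    · exact absurd heq (hcon t ht)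
    · exact hgt
  -- first crossing σ of the level ξ₁
  have hSclosed : IsClosed (Icc 0 τ₁ ∩ u ⁻¹' (Iic ξ₁)) := by
    apply ContinuousOn.preimage_isClosed_of_isClosed
      (huc.mono (fun x hx => hx.1)) isClosed_Icc isClosed_Iic
  have hSne : (Icc 0 τ₁ ∩ u ⁻¹' (Iic ξ₁)).Nonempty :=
    ⟨τ₁, ⟨⟨hτ₁.le, le_refl _⟩, by simp [huτ₁]⟩⟩
  have hSbdd : BddBelow (Icc 0 τ₁ ∩ u ⁻¹' (Iic ξ₁)) := ⟨0, fun x hx => hx.1.1⟩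
  set σ := sInf (Icc 0 τ₁ ∩ u ⁻¹' (Iic ξ₁)) with hσdef
  have hσS : σ ∈ Icc 0 τ₁ ∩ u ⁻¹' (Iic ξ₁) := hSclosed.csInf_mem hSne hSbdd
  have hσle : σ ≤ τ₁ := hσS.1.2
  have hσpos : 0 < σ := by
    rcases hσS.1.1.lt_or_eq with h | h
    · exact h
    · exfalso
      have h2 : u σ ≤ ξ₁ := hσS.2
      rw [← h, hu0] at h2
      linarith
  have hσIoi : σ ∈ Ioi (0:ℝ) := hσpos
  have hbefore : ∀ t, 0 ≤ t → t < σ → ξ₁ < u t := by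
    intro t ht0 htσ
    by_contra hle
    push_neg at hle
    have htS : t ∈ Icc 0 τ₁ ∩ u ⁻¹' (Iic ξ₁) := ⟨⟨ht0, htσ.le.trans hσle⟩, hle⟩
    exact absurd (csInf_le hSbdd htS) (not_le.2 htσ)
  have huσ : u σ = ξ₁ := by
    refine le_antisymm hσS.2 ?_
    have hcont : Tendsto u (nhdsWithin σ (Iio σ)) (nhds (u σ)) :=
      ((hud σ hσIoi).continuousAt).continuousWithinAt
    refine ge_of_tendsto hcont ?_
    filter_upwards [Ioo_mem_nhdsLT_of_mem (⟨hσpos, le_refl σ⟩ : σ ∈ Ioc 0 σ)] with s hs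
    exact (hbefore s hs.1.le hs.2).le
  have hupos : ∀ t ∈ Icc (0:ℝ) σ, 0 < u t := fun t ht => hup t ⟨ht.1, ht.2.trans hσle⟩
  have hwposσ : ∀ t ∈ Ioo (0:ℝ) σ, 0 < w t :=
    fun t ht => hwpos t ⟨ht.1, lt_of_lt_of_le ht.2 hσle⟩
  -- f(u) > 0 above ξ₁
  have hfpos : ∀ s : ℝ, ξ₁ < s → 0 < a * s ^ (1 + 2 / m) - b * s := by
    intro s hs
    have hs0 : 0 < s := hξpos.trans hs
    have h1 : b < a * s ^ (2 / m) := by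
      have h2 := Real.rpow_lt_rpow hξpos.le hs (by positivity : (0:ℝ) < 2 / m)
      calc b = a * ξ₁ ^ (2 / m) := hξb.symm
        _ < a * s ^ (2 / m) := by nlinarith
    have h2 : s ^ (1 + 2 / m) = s ^ (2 / m) * s := by
      rw [show (1:ℝ) + 2 / m = 2 / m + 1 by ring, Real.rpow_add_one hs0.ne']
    rw [h2]
    nlinarith [mul_pos hs0 (sub_pos.mpr h1)]
  -- u' < 0 on (0, σ]
  have hu'neg : ∀ t ∈ Ioc (0:ℝ) σ, deriv u t < 0 := by
    have hGd : ∀ t ∈ Ioo (0:ℝ) σ, HasDerivAt (fun s => -(Real.sinh s * deriv u s))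
        (Real.sinh t * (a * u t ^ (1 + 2 / m) - b * u t)) t := by
      intro t ht
      have ht0 : t ∈ Ioi (0:ℝ) := ht.1
      have hts : (0:ℝ) < Real.sinh t := Real.sinh_pos_iff.2 ht.1
      have hU' := (hud' t ht0).hasDerivAt
      have hu2 : deriv (deriv u) t
          = -((Real.cosh t / Real.sinh t) * deriv u t)
            - (a * u t ^ (1 + 2 / m) - b * u t) := by
        have := hode t ht0; linarith
      have h := ((Real.hasDerivAt_sinh t).mul hU').neg
      convert h using 1
      · rfl
      · rfl
      · rfl
      rw [hu2]
      field_simp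
      ring
    have hGpos := aux_pos_of_deriv_pos (g := fun s => -(Real.sinh s * deriv u s)) hσpos
      (fun t ht => (((Real.continuous_sinh.continuousAt).mul
        (hud' t ht.1).continuousAt).neg).continuousWithinAt)
      (fun t ht => by
        rw [(hGd t ht).deriv]
        exact mul_pos (Real.sinh_pos_iff.2 ht.1) (hfpos _ (hbefore t ht.1.le ht.2)))
      (by
        have hs : Tendsto Real.sinh (nhdsWithin 0 (Ioi 0)) (nhds 0) := by
          have := Real.continuous_sinh.tendsto 0
          rw [Real.sinh_zero] at this
          exact this.mono_left nhdsWithin_le_nhds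
        have h := (hs.mul hu'0).neg
        simpa using h)
    intro t ht
    have h := hGpos t ht
    have hts : (0:ℝ) < Real.sinh t := Real.sinh_pos_iff.2 ht.1
    by_contra hge
    push_neg at hge
    nlinarith [mul_nonneg hts.le hge]
  -- limits of u and w at 0⁺
  have hu0' : Tendsto u (nhdsWithin 0 (Ioi 0)) (nhds α) := by
    have h : Tendsto u (nhdsWithin 0 (Ici 0)) (nhds (u 0)) := huc 0 self_mem_Ici
    rw [hu0] at h
    exact h.mono_left (nhdsWithin_mono 0 Ioi_subset_Ici_self)
  have hw1 : Tendsto w (nhdsWithin 0 (Ioi 0)) (nhds 1) := by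
    have h : Tendsto w (nhdsWithin 0 (Ici 0)) (nhds (w 0)) := hwc 0 self_mem_Ici
    rw [hw0] at h
    exact h.mono_left (nhdsWithin_mono 0 Ioi_subset_Ici_self)
  -- the Wronskian Ψ and its derivative
  have hΨd : ∀ t ∈ Ioo (0:ℝ) σ, HasDerivAt
      (fun s => Real.sinh s * (w s * ((a * (1 + 2 / m) * u s ^ (2 / m) - b) * deriv u s)
        - deriv w s * (a * u s ^ (1 + 2 / m) - b * u s)))
      (Real.sinh t * w t * (a * (1 + 2 / m) * (2 / m) * u t ^ (2 / m - 1))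
        * (deriv u t) ^ 2) t := by
    intro t ht
    have ht0 : t ∈ Ioi (0:ℝ) := ht.1
    have hts : (0:ℝ) < Real.sinh t := Real.sinh_pos_iff.2 ht.1
    have hut : 0 < u t := hupos t ⟨ht.1.le, ht.2.le⟩
    have hU := (hud t ht0).hasDerivAt
    have hU' := (hud' t ht0).hasDerivAt
    have hW := (hwd t ht0).hasDerivAt
    have hW' := (hwd' t ht0).hasDerivAt
    have hu2 : deriv (deriv u) t
        = -((Real.cosh t / Real.sinh t) * deriv u t)
          - (a * u t ^ (1 + 2 / m) - b * u t) := by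
      have := hode t ht0; linarith
    have hw2 : deriv (deriv w) t
        = -((Real.cosh t / Real.sinh t) * deriv w t)
          - (a * (1 + 2 / m) * u t ^ (2 / m) - b) * w t := by
      have := hwode t ht0; linarith
    have h1le : (1:ℝ) ≤ 1 + 2 / m := by
      have : (0:ℝ) < 2 / m := by positivity
      linarith
    have hq := ((hU.rpow_const (p := 2 / m) (Or.inl hut.ne')).const_mul
      (a * (1 + 2 / m))).sub_const b
    have hv := ((hU.rpow_const (p := 1 + 2 / m) (Or.inr h1le)).const_mul a).sub
      (hU.const_mul b)
    have hbig := (Real.hasDerivAt_sinh t).mul ((hW.mul (hq.mul hU')).sub (hW'.mul hv))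
    have e1 : u t ^ (1 + 2 / m) = u t ^ (2 / m) * u t := by
      rw [show (1:ℝ) + 2 / m = 2 / m + 1 by ring, Real.rpow_add_one hut.ne']
    have e2 : u t ^ (2 / m) = u t ^ (2 / m - 1) * u t := by
      nth_rewrite 1 [show (2:ℝ) / m = 2 / m - 1 + 1 by ring]
      rw [Real.rpow_add_one hut.ne']
    convert hbig using 1
    · rfl
    · rfl
    · rfl
    simp only [Pi.mul_apply, Pi.sub_apply]
    rw [hu2, hw2, show (1:ℝ) + 2 / m - 1 = 2 / m by ring, e1, e2]
    field_simp
    ring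
  -- Ψ tends to 0 at 0⁺
  have hΨlim : Tendsto
      (fun s => Real.sinh s * (w s * ((a * (1 + 2 / m) * u s ^ (2 / m) - b) * deriv u s)
        - deriv w s * (a * u s ^ (1 + 2 / m) - b * u s)))
      (nhdsWithin 0 (Ioi 0)) (nhds 0) := by
    have hsinh0 : Tendsto Real.sinh (nhdsWithin 0 (Ioi 0)) (nhds 0) := by
      have := Real.continuous_sinh.tendsto 0
      rw [Real.sinh_zero] at this
      exact this.mono_left nhdsWithin_le_nhds
    have hq0 : Tendsto (fun t => a * (1 + 2 / m) * u t ^ (2 / m) - b)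
        (nhdsWithin 0 (Ioi 0)) (nhds (a * (1 + 2 / m) * α ^ (2 / m) - b)) :=
      ((((Real.continuousAt_rpow_const α (2 / m) (Or.inl hα0.ne')).tendsto.comp
        hu0').const_mul (a * (1 + 2 / m)))).sub_const b
    have hv0 : Tendsto (fun t => a * u t ^ (1 + 2 / m) - b * u t)
        (nhdsWithin 0 (Ioi 0)) (nhds (a * α ^ (1 + 2 / m) - b * α)) :=
      (((Real.continuousAt_rpow_const α (1 + 2 / m) (Or.inl hα0.ne')).tendsto.comp
        hu0').const_mul a).sub (hu0'.const_mul b)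
    have h := hsinh0.mul ((hw1.mul (hq0.mul hu'0)).sub (hw'0.mul hv0))
    simpa using h
  -- Ψ continuous on (0, σ]
  have hΨcont : ContinuousOn
      (fun s => Real.sinh s * (w s * ((a * (1 + 2 / m) * u s ^ (2 / m) - b) * deriv u s)
        - deriv w s * (a * u s ^ (1 + 2 / m) - b * u s)))
      (Ioc 0 σ) := by
    intro t ht
    have ht0 : t ∈ Ioi (0:ℝ) := ht.1
    have hut : 0 < u t := hupos t ⟨ht.1.le, ht.2⟩
    have hcu : ContinuousAt u t := (hud t ht0).continuousAt
    have hc1 : ContinuousAt (fun s => u s ^ (2 / m)) t :=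
      (Real.continuousAt_rpow_const (u t) _ (Or.inl hut.ne')).comp hcu
    have hc2 : ContinuousAt (fun s => u s ^ (1 + 2 / m)) t :=
      (Real.continuousAt_rpow_const (u t) _ (Or.inl hut.ne')).comp hcu
    exact (Real.continuous_sinh.continuousAt.mul
      (((hwd t ht0).continuousAt.mul
        (((hc1.const_mul (a * (1 + 2 / m))).sub continuousAt_const).mul
          (hud' t ht0).continuousAt)).sub
        ((hwd' t ht0).continuousAt.mul
          ((hc2.const_mul a).sub (hcu.const_mul b))))).continuousWithinAt
  -- Ψ has positive derivative on (0, σ)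
  have hΨderivpos : ∀ t ∈ Ioo (0:ℝ) σ, 0 < deriv
      (fun s => Real.sinh s * (w s * ((a * (1 + 2 / m) * u s ^ (2 / m) - b) * deriv u s)
        - deriv w s * (a * u s ^ (1 + 2 / m) - b * u s))) t := by
    intro t ht
    rw [(hΨd t ht).deriv]
    have hts : (0:ℝ) < Real.sinh t := Real.sinh_pos_iff.2 ht.1
    have hwt : 0 < w t := hwposσ t ht
    have hut : 0 < u t := hupos t ⟨ht.1.le, ht.2.le⟩
    have hK : 0 < a * (1 + 2 / m) * (2 / m) * u t ^ (2 / m - 1) := by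
      have h1 : (0:ℝ) < 2 / m := by positivity
      have h2 : (0:ℝ) < u t ^ (2 / m - 1) := Real.rpow_pos_of_pos hut _
      have h3 : (0:ℝ) < a * (1 + 2 / m) * (2 / m) :=
        mul_pos (mul_pos ha (by linarith)) h1
      exact mul_pos h3 h2
    have h4 : deriv u t < 0 := hu'neg t ⟨ht.1, ht.2.le⟩
    have h5 : 0 < (deriv u t) ^ 2 := by nlinarith
    exact mul_pos (mul_pos (mul_pos hts hwt) hK) h5
  -- hence Ψ(σ) > 0
  have hΨσ : 0 < Real.sinh σ * (w σ * ((a * (1 + 2 / m) * u σ ^ (2 / m) - b) * deriv u σ)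
      - deriv w σ * (a * u σ ^ (1 + 2 / m) - b * u σ)) :=
    aux_pos_of_deriv_pos hσpos hΨcont hΨderivpos hΨlim σ ⟨hσpos, le_refl σ⟩
  -- but Ψ(σ) ≤ 0
  have hu'σ : deriv u σ < 0 := hu'neg σ ⟨hσpos, le_refl σ⟩
  have hwσ : 0 ≤ w σ := by
    have hcw : Tendsto w (nhdsWithin σ (Iio σ)) (nhds (w σ)) :=
      ((hwd σ hσIoi).continuousAt).continuousWithinAt
    refine ge_of_tendsto hcw ?_
    filter_upwards [Ioo_mem_nhdsLT_of_mem (⟨hσpos, le_refl σ⟩ : σ ∈ Ioc 0 σ)] with s hs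
    exact (hwposσ s hs).le
  have hvσ : a * u σ ^ (1 + 2 / m) - b * u σ = 0 := by
    rw [huσ, show (1:ℝ) + 2 / m = 2 / m + 1 by ring, Real.rpow_add_one hξpos.ne', hxipow]
    field_simp
    ring
  have hqσ : a * (1 + 2 / m) * u σ ^ (2 / m) - b = 2 / m * b := by
    rw [huσ, hxipow]
    field_simp
    ring
  have hfinal : Real.sinh σ * (w σ * ((a * (1 + 2 / m) * u σ ^ (2 / m) - b) * deriv u σ)
      - deriv w σ * (a * u σ ^ (1 + 2 / m) - b * u σ)) ≤ 0 := by
    rw [hvσ, hqσ]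
    have h1 : (0:ℝ) < Real.sinh σ := Real.sinh_pos_iff.2 hσpos
    have h2 : (0:ℝ) < 2 / m * b := by positivity
    have h3 : w σ * (2 / m * b * deriv u σ) ≤ 0 :=
      mul_nonpos_of_nonneg_of_nonpos hwσ (mul_neg_of_pos_of_neg h2 hu'σ).le
    have h4 : w σ * (2 / m * b * deriv u σ) - deriv w σ * 0 ≤ 0 := by simpa using h3
    nlinarith [mul_nonneg h1.le (neg_nonneg.mpr h4)]
  linarith
/-- The variation `w` must change sign before `τ₁` (Lemma 5.4): let `α ∈ G ∪ N`
with solution `u`, let `ξ₁ = (b̃/ã)^{m/2}` be the positive zero of `f`, and let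
`τ₁ ∈ (0, b(α))` be the point with `u(τ₁) = ξ₁`.  If `w` solves the linearized
equation `w'' + coth(τ)·w' + f'(u)·w = 0` with `w(0) = 1`, `w'(0⁺) = 0`, where
`f'(s) = ã(1+2/m)s^{2/m} − b̃`, then `w` has a zero in `(0, τ₁)`.  The two
conjuncts treat the cases `α ∈ N` (finite smallest zero `b(α)`) and `α ∈ G`
(`b(α) = ∞`). -/
theorem variation_changes_sign
    (m a b : ℝ) (hm : 2 < m) (ha : 0 < a) (hb : 0 < b)
    (F : ℝ → ℝ) (hF : ∀ s, F s = a * s ^ (1 + 2 / m) - b * s)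
    (α : ℝ) (hα : 0 < α)
    (u : ℝ → ℝ)
    (huc : ContinuousOn u (Ici 0))
    (hud : ∀ τ ∈ Ioi (0 : ℝ), DifferentiableAt ℝ u τ)
    (hud' : ∀ τ ∈ Ioi (0 : ℝ), DifferentiableAt ℝ (deriv u) τ)
    (hode : ∀ τ ∈ Ioi (0 : ℝ),
      deriv (deriv u) τ + (Real.cosh τ / Real.sinh τ) * deriv u τ + F (u τ) = 0)
    (hu0 : u 0 = α)
    (hu'0 : Tendsto (deriv u) (nhdsWithin 0 (Ioi 0)) (nhds 0))
    (ξ₁ : ℝ) (hξ₁ : ξ₁ = (b / a) ^ (m / 2))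
    (w : ℝ → ℝ)
    (hwc : ContinuousOn w (Ici 0))
    (hwd : ∀ τ ∈ Ioi (0 : ℝ), DifferentiableAt ℝ w τ)
    (hwd' : ∀ τ ∈ Ioi (0 : ℝ), DifferentiableAt ℝ (deriv w) τ)
    (hwode : ∀ τ ∈ Ioi (0 : ℝ),
      deriv (deriv w) τ + (Real.cosh τ / Real.sinh τ) * deriv w τ
        + (a * (1 + 2 / m) * u τ ^ (2 / m) - b) * w τ = 0)
    (hw0 : w 0 = 1)
    (hw'0 : Tendsto (deriv w) (nhdsWithin 0 (Ioi 0)) (nhds 0)) :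
    (∀ bα : ℝ, 0 < bα → u bα = 0 → (∀ τ ∈ Ico 0 bα, 0 < u τ) →
        ∀ τ₁ ∈ Ioo 0 bα, u τ₁ = ξ₁ → ∃ τ ∈ Ioo 0 τ₁, w τ = 0) ∧
    ((∀ τ ∈ Ioi (0 : ℝ), 0 < u τ) → Tendsto u atTop (nhds 0) →
        ∀ τ₁ ∈ Ioi (0 : ℝ), u τ₁ = ξ₁ → ∃ τ ∈ Ioo 0 τ₁, w τ = 0) := by
  have hode' : ∀ τ ∈ Ioi (0 : ℝ),
      deriv (deriv u) τ + (Real.cosh τ / Real.sinh τ) * deriv u τ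
        + (a * u τ ^ (1 + 2 / m) - b * u τ) = 0 := by
    intro τ hτ
    have h := hode τ hτ
    rw [hF] at h
    exact h
  have hxipow : ξ₁ ^ (2 / m) = b / a := by rw [hξ₁]; exact xi_pow m a b hm ha hb
  have hξpos : 0 < ξ₁ := by rw [hξ₁]; exact Real.rpow_pos_of_pos (div_pos hb ha) _
  constructor
  · -- case N
    intro bα hbα hubα hupos τ₁ hτ₁ huτ₁
    haveI hne : (nhdsWithin bα (Ioo 0 bα)).NeBot := by
      apply mem_closure_iff_nhdsWithin_neBot.1
      rw [closure_Ioo (ne_of_lt hbα)]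
      exact ⟨hbα.le, le_refl _⟩
    have hlm : Ioi (0:ℝ) ∈ nhdsWithin bα (Ioo 0 bα) :=
      mem_of_superset self_mem_nhdsWithin (fun x hx => hx.1)
    have hul : Tendsto u (nhdsWithin bα (Ioo 0 bα)) (nhds 0) := by
      have h : Tendsto u (nhdsWithin bα (Ici 0)) (nhds (u bα)) := huc bα hbα.le
      rw [hubα] at h
      exact h.mono_left (nhdsWithin_mono bα (fun x hx => hx.1.le))
    have hαξ : ξ₁ < α := alpha_gt m a b ξ₁ α hm ha hb hα hξ₁ hxipow u huc hud hud'
      hode' hu0 hu'0 (nhdsWithin bα (Ioo 0 bα)) hlm hul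
    have hup : ∀ τ ∈ Icc 0 τ₁, 0 < u τ :=
      fun τ hτ => hupos τ ⟨hτ.1, lt_of_le_of_lt hτ.2 hτ₁.2⟩
    exact key m a b ξ₁ α hm ha hb hxipow hξpos u w huc hud hud' hode' hu0 hu'0
      hwc hwd hwd' hwode hw0 hw'0 hαξ τ₁ hτ₁.1 huτ₁ hup
  · -- case G
    intro hupos hutop τ₁ hτ₁ huτ₁
    have hαξ : ξ₁ < α := alpha_gt m a b ξ₁ α hm ha hb hα hξ₁ hxipow u huc hud hud'
      hode' hu0 hu'0 atTop (Ioi_mem_atTop 0) hutop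
    have hup : ∀ τ ∈ Icc 0 τ₁, 0 < u τ := by
      intro τ hτ
      rcases hτ.1.lt_or_eq with h | h
      · exact hupos τ h
      · rw [← h, hu0]; exact hα
    exact key m a b ξ₁ α hm ha hb hxipow hξpos u w huc hud hud' hode' hu0 hu'0
      hwc hwd hwd' hwode hw0 hw'0 hαξ τ₁ hτ₁ huτ₁ hup
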